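/- Let X₁ and Z be independent real random variables, X₁ exponentially distributed with mean λ₁ > 0 and Z nonnegative. Let λ₂, A, B, ρ, η, k₂, u₁, u₂ > 0 with k₂·u₂·u₁ < 1, set C = B/(A·k₂·u₁) − B·u₂/A, D_Z = (1/C)·( η·Z/(A·k₂) + η·Z·u₂/A + u₂/(A·ρ) + 1/(A·ρ·k₂) ), and Q₁ = (1/λ₁ + B/(A·k₂·λ₂·u₁))·(η/(A·C·k₂) + η·u₂/(A·C)) − η/(A·k₂·λ₂). Then 𝔼[ 1{X₁ > D_Z} · exp( −(B·ρ·X₁ − η·ρ·Z·u₁ − u₁)/(A·ρ·k₂·λ₂·u₁) ) ] = ( A·k₂·λ₂·u₁/(A·k₂·λ₂·u₁ + B·λ₁) ) · exp( 1/(A·ρ·k₂·λ₂) ) · exp( −(1/λ₁ + B/(A·k₂·λ₂·u₁))·(u₂ + 1/k₂)/(A·C·ρ) ) · 𝔼[ exp(−Q₁·Z) ]. -/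

import Mathlib

open MeasureTheory ProbabilityTheory Real

lemma exp_int_Ioi (c : ℝ) {s : ℝ} (hs : 0 < s) :
    ∫ x in Set.Ioi c, Real.exp (-(s*x)) = Real.exp (-(s*c))/s := by
  have h := integral_comp_mul_left_Ioi (fun x => Real.exp (-x)) c hs
  simp only [smul_eq_mul] at h
  rw [h, integral_exp_neg_Ioi]
  field_simp

/-- A real random variable `X` is exponentially distributed with mean `lam > 0` if its law has
density `(1/lam) * exp (-x/lam)` on `[0, ∞)` and `0` on `(-∞, 0)`. -/
def HasExpLaw {Ω : Type*} [MeasurableSpace Ω] (P : Measure Ω) (X : Ω → ℝ) (lam : ℝ) : Prop :=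
  Measurable X ∧
    P.map X = MeasureTheory.volume.withDensity
      (fun x => ENNReal.ofReal (if 0 ≤ x then (1 / lam) * Real.exp (-x / lam) else 0))

theorem stmt_8 {Ω : Type*} [MeasurableSpace Ω] (P : Measure Ω) [IsProbabilityMeasure P]
    (lam₁ lam₂ A B ρ η k₂ u₁ u₂ : ℝ)
    (hlam₁ : 0 < lam₁) (hlam₂ : 0 < lam₂) (hA : 0 < A) (hB : 0 < B) (hρ : 0 < ρ)
    (hη : 0 < η) (hk₂ : 0 < k₂) (hu₁ : 0 < u₁) (hu₂ : 0 < u₂)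
    (hcond : k₂ * u₂ * u₁ < 1)
    (X₁ Z : Ω → ℝ) (hX₁ : HasExpLaw P X₁ lam₁)
    (hZmeas : Measurable Z) (hZnonneg : ∀ ω, 0 ≤ Z ω)
    (hindep : IndepFun X₁ Z P)
    (C : ℝ) (hC : C = B / (A * k₂ * u₁) - B * u₂ / A)
    (DZ : Ω → ℝ)
    (hDZ : ∀ ω, DZ ω = (1 / C) * (η * Z ω / (A * k₂) + η * Z ω * u₂ / A +
        u₂ / (A * ρ) + 1 / (A * ρ * k₂)))
    (Q₁ : ℝ)
    (hQ₁ : Q₁ = (1 / lam₁ + B / (A * k₂ * lam₂ * u₁)) *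
        (η / (A * C * k₂) + η * u₂ / (A * C)) - η / (A * k₂ * lam₂)) :
    (∫ ω, (if DZ ω < X₁ ω then
        Real.exp (-(B * ρ * X₁ ω - η * ρ * Z ω * u₁ - u₁) / (A * ρ * k₂ * lam₂ * u₁))
      else 0) ∂P) =
      (A * k₂ * lam₂ * u₁ / (A * k₂ * lam₂ * u₁ + B * lam₁)) *
        Real.exp (1 / (A * ρ * k₂ * lam₂)) *
        Real.exp (-(1 / lam₁ + B / (A * k₂ * lam₂ * u₁)) * (u₂ + 1 / k₂) / (A * C * ρ)) *
        ∫ ω, Real.exp (-Q₁ * Z ω) ∂P := by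
  have hCpos : 0 < C := by
    rw [hC, sub_pos, div_lt_div_iff₀ (by positivity) (by positivity)]
    nlinarith [mul_lt_mul_of_pos_left hcond (mul_pos hA hB)]
  -- abbreviations
  set s : ℝ := 1 / lam₁ + B / (A * k₂ * lam₂ * u₁) with hs_def
  set coef : ℝ := η / (A * C * k₂) + η * u₂ / (A * C) with hcoef_def
  set β : ℝ := η / (A * k₂ * lam₂) with hβ_def
  set γ : ℝ := 1 / (A * ρ * k₂ * lam₂) with hγ_def
  set c0 : ℝ := (u₂ + 1 / k₂) / (A * C * ρ) with hc0_def
  have hs : 0 < s := by positivity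
  have hcoefpos : 0 < coef := by positivity
  have hc0pos : 0 < c0 := by positivity
  have hDZ' : ∀ ω, DZ ω = coef * Z ω + c0 := by
    intro ω
    rw [hDZ, hcoef_def, hc0_def]
    field_simp
    ring
  -- the joint function
  set F : ℝ × ℝ → ℝ := fun p => if coef * p.2 + c0 < p.1 then
      Real.exp (-(B * ρ * p.1 - η * ρ * p.2 * u₁ - u₁) / (A * ρ * k₂ * lam₂ * u₁)) else 0
    with hF_def
  have hFmeas : Measurable F := by
    apply Measurable.ite
    · exact measurableSet_lt (by fun_prop) measurable_fst
    · fun_prop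
    · exact measurable_const
  have hFnonneg : ∀ p, 0 ≤ F p := by
    intro p; rw [hF_def]; dsimp only
    split <;> positivity
  set g : ℝ → ℝ := fun x => if 0 ≤ x then (1 / lam₁) * Real.exp (-x / lam₁) else 0 with hg_def
  have hgmeas : Measurable g := by
    apply Measurable.ite measurableSet_Ici (by fun_prop) measurable_const
  set K₀ : ℝ := 1 / (lam₁ * s) * Real.exp (γ - s * c0) with hK₀_def
  have hK₀pos : 0 < K₀ := by positivity
  -- inner integral computation
  have inner : ∀ z : ℝ, 0 ≤ z →
      ∫⁻ x, ENNReal.ofReal (F (x, z)) ∂(P.map X₁) =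
        ENNReal.ofReal (K₀ * Real.exp (-Q₁ * z)) := by
    intro z hz
    have hdz : 0 ≤ coef * z + c0 := by positivity
    rw [hX₁.2]
    have hgm' : Measurable fun x : ℝ =>
        ENNReal.ofReal (if 0 ≤ x then (1 / lam₁) * Real.exp (-x / lam₁) else 0) :=
      hgmeas.ennreal_ofReal
    rw [lintegral_withDensity_eq_lintegral_mul _ hgm' (by fun_prop)]
    have hptwise : ∀ x : ℝ,
        ((fun x => ENNReal.ofReal (if 0 ≤ x then (1 / lam₁) * Real.exp (-x / lam₁) else 0)) *
          fun x => ENNReal.ofReal (F (x, z))) x =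
        (Set.Ioi (coef * z + c0)).indicator
          (fun x => ENNReal.ofReal ((1 / lam₁ * Real.exp (β * z + γ)) * Real.exp (-(s * x)))) x := by
      intro x
      simp only [Pi.mul_apply, hF_def]
      by_cases hx : coef * z + c0 < x
      · have hx0 : 0 ≤ x := le_trans hdz hx.le
        rw [Set.indicator_of_mem (Set.mem_Ioi.mpr hx), if_pos hx, if_pos hx0,
          ← ENNReal.ofReal_mul (by positivity)]
        congr 1
        have h2 : -x / lam₁ + -(B * ρ * x - η * ρ * z * u₁ - u₁) / (A * ρ * k₂ * lam₂ * u₁)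
            = (β * z + γ) + -(s * x) := by
          rw [hβ_def, hγ_def, hs_def]; field_simp; ring
        calc 1 / lam₁ * Real.exp (-x / lam₁) *
              Real.exp (-(B * ρ * x - η * ρ * z * u₁ - u₁) / (A * ρ * k₂ * lam₂ * u₁))
            = 1 / lam₁ * Real.exp (-x / lam₁ +
                -(B * ρ * x - η * ρ * z * u₁ - u₁) / (A * ρ * k₂ * lam₂ * u₁)) := by
              rw [Real.exp_add]; ring
          _ = 1 / lam₁ * Real.exp (β * z + γ) * Real.exp (-(s * x)) := by
              rw [h2, Real.exp_add]; ring
      · rw [Set.indicator_of_notMem (by simpa using hx), if_neg hx, ENNReal.ofReal_zero, mul_zero]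
    rw [lintegral_congr hptwise, lintegral_indicator measurableSet_Ioi _]
    have hInt : IntegrableOn (fun x => (1 / lam₁ * Real.exp (β * z + γ)) * Real.exp (-(s * x)))
        (Set.Ioi (coef * z + c0)) := by
      have h3 := (exp_neg_integrableOn_Ioi (coef * z + c0) hs).const_mul
        (1 / lam₁ * Real.exp (β * z + γ))
      simpa [neg_mul, IntegrableOn] using h3
    rw [← ofReal_integral_eq_lintegral_ofReal hInt (ae_of_all _ fun x => by positivity)]
    rw [integral_const_mul, exp_int_Ioi _ hs]
    congr 1
    rw [hK₀_def]
    rw [div_eq_mul_inv (Real.exp _) s, ← mul_assoc, mul_assoc (1/lam₁) _ _, ← Real.exp_add]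
    have hexpo : β * z + γ + -(s * (coef * z + c0)) = γ - s * c0 + -Q₁ * z := by
      rw [hQ₁]; ring
    rw [hexpo, Real.exp_add]
    field_simp
  -- measures
  have hμ₁ : IsProbabilityMeasure (P.map X₁) := Measure.isProbabilityMeasure_map hX₁.1.aemeasurable
  have hμ₂ : IsProbabilityMeasure (P.map Z) := Measure.isProbabilityMeasure_map hZmeas.aemeasurable
  have hz_ae : ∀ᵐ z ∂(P.map Z), 0 ≤ z :=
    (ae_map_iff hZmeas.aemeasurable measurableSet_Ici).mpr (ae_of_all _ hZnonneg)
  -- LHS transformation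
  have hLHS : (∫ ω, (if DZ ω < X₁ ω then
        Real.exp (-(B * ρ * X₁ ω - η * ρ * Z ω * u₁ - u₁) / (A * ρ * k₂ * lam₂ * u₁))
      else 0) ∂P) = K₀ * (∫⁻ z, ENNReal.ofReal (Real.exp (-Q₁ * z)) ∂(P.map Z)).toReal := by
    have hfeq : ∀ ω, (if DZ ω < X₁ ω then
        Real.exp (-(B * ρ * X₁ ω - η * ρ * Z ω * u₁ - u₁) / (A * ρ * k₂ * lam₂ * u₁))
      else 0) = F (X₁ ω, Z ω) := by
      intro ω; rw [hF_def]; simp only [hDZ' ω]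
    simp_rw [hfeq]
    rw [integral_eq_lintegral_of_nonneg_ae (ae_of_all _ fun ω => hFnonneg _)
      ((hFmeas.comp (hX₁.1.prodMk hZmeas)).aestronglyMeasurable)]
    rw [← lintegral_map hFmeas.ennreal_ofReal (hX₁.1.prodMk hZmeas)]
    rw [(indepFun_iff_map_prod_eq_prod_map_map hX₁.1.aemeasurable hZmeas.aemeasurable).mp hindep]
    rw [lintegral_prod_symm _ (by fun_prop)]
    rw [lintegral_congr_ae (hz_ae.mono fun z hz => inner z hz)]
    simp_rw [ENNReal.ofReal_mul hK₀pos.le]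
    rw [lintegral_const_mul' _ _ ENNReal.ofReal_ne_top, ENNReal.toReal_mul,
      ENNReal.toReal_ofReal hK₀pos.le]
  rw [hLHS]
  have hRHS : ∫ ω, Real.exp (-Q₁ * Z ω) ∂P
      = (∫⁻ z, ENNReal.ofReal (Real.exp (-Q₁ * z)) ∂(P.map Z)).toReal := by
    rw [integral_eq_lintegral_of_nonneg_ae (ae_of_all _ fun ω => (Real.exp_pos _).le)
      ((hZmeas.const_mul (-Q₁)).exp.aestronglyMeasurable)]
    rw [← lintegral_map (f := fun z : ℝ => ENNReal.ofReal (Real.exp (-Q₁ * z))) (by fun_prop) hZmeas]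
  rw [hRHS]
  have hden : A * k₂ * lam₂ * u₁ + B * lam₁ ≠ 0 := by positivity
  have h1 : (1:ℝ) / (lam₁ * s) = A * k₂ * lam₂ * u₁ / (A * k₂ * lam₂ * u₁ + B * lam₁) := by
    rw [hs_def]; field_simp
  have h2 : γ - s * c0 = γ + (-s * (u₂ + 1 / k₂) / (A * C * ρ)) := by
    rw [hc0_def]; ring
  rw [hK₀_def, h1, h2, Real.exp_add]
  ring
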